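/- Let A ∈ ℝ^{m×n}, let Θ ∈ ℝ^{n×n} be a diagonal matrix with strictly positive diagonal entries, and let M be the symmetric (n+m)×(n+m) block matrix M = [[−Θ^{-1}, Aᵀ],[A, 0]]. If λ ≠ 0 is an eigenvalue of M and x = (x₁, x₂) with x₁ ∈ ℝⁿ, x₂ ∈ ℝᵐ is a corresponding eigenvector with ‖x‖ = 1, then ‖x₂‖ ≤ ‖A‖ / √(λ² + ‖A‖²). -/

import Mathlib

open Matrix

/-- Euclidean norm of a real vector. -/
noncomputable def vecEnorm {ι : Type*} [Fintype ι] (x : ι → ℝ) : ℝ :=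
  Real.sqrt (∑ i, (x i) ^ 2)

/-- Spectral norm (largest singular value) of a real matrix. -/
noncomputable def specNorm {m n : ℕ} (A : Matrix (Fin m) (Fin n) ℝ) : ℝ :=
  Real.sqrt (⨆ i, (Matrix.isHermitian_mul_conjTranspose_self A).eigenvalues i)

lemma dot_nonneg' {ι : Type*} [Fintype ι] (x : ι → ℝ) : 0 ≤ x ⬝ᵥ x :=
  Finset.sum_nonneg fun i _ => mul_self_nonneg _

lemma enorm_eq_sqrt_dot {ι : Type*} [Fintype ι] (x : ι → ℝ) :
    vecEnorm x = Real.sqrt (x ⬝ᵥ x) := by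
  simp [vecEnorm, dotProduct, pow_two]

lemma sq_enorm {ι : Type*} [Fintype ι] (x : ι → ℝ) : vecEnorm x ^ 2 = x ⬝ᵥ x := by
  rw [enorm_eq_sqrt_dot, Real.sq_sqrt (dot_nonneg' x)]

/-- quadratic form bounded by max eigenvalue -/
lemma quadform_le {m n : ℕ} (A : Matrix (Fin m) (Fin n) ℝ) (w : Fin m → ℝ) :
    w ⬝ᵥ ((A * Aᴴ) *ᵥ w) ≤
      (⨆ i, (Matrix.isHermitian_mul_conjTranspose_self A).eigenvalues i) * (w ⬝ᵥ w) := by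
  set hH := Matrix.isHermitian_mul_conjTranspose_self A
  set L := ⨆ i, hH.eigenvalues i with hLdef
  set U : Matrix (Fin m) (Fin m) ℝ := (hH.eigenvectorUnitary : Matrix (Fin m) (Fin m) ℝ) with hU
  have hUU : U * star U = 1 := Matrix.mem_unitaryGroup_iff.mp hH.eigenvectorUnitary.2
  set y : Fin m → ℝ := w ᵥ* U with hy
  have hyU : Uᴴ *ᵥ w = y := by
    rw [conjTranspose_eq_transpose_of_trivial, mulVec_transpose]
  have hdiag : (A * Aᴴ) = U * Matrix.diagonal hH.eigenvalues * Uᴴ := by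
    have := hH.spectral_theorem
    simpa [hU, Matrix.star_eq_conjTranspose] using this
  have hquad : w ⬝ᵥ ((A * Aᴴ) *ᵥ w) = y ⬝ᵥ (Matrix.diagonal hH.eigenvalues *ᵥ y) := by
    conv_lhs => rw [hdiag]
    rw [← mulVec_mulVec, ← mulVec_mulVec, dotProduct_mulVec (v := w), hyU]
  have hyy : y ⬝ᵥ y = w ⬝ᵥ w := by
    have h1 : w ⬝ᵥ (U *ᵥ y) = y ⬝ᵥ y := by rw [dotProduct_mulVec]
    have h2 : U *ᵥ y = w := by
      rw [← hyU, mulVec_mulVec, ← Matrix.star_eq_conjTranspose, hUU, one_mulVec]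
    rw [← h1, h2]
  rw [hquad, ← hyy]
  have hterm : y ⬝ᵥ (Matrix.diagonal hH.eigenvalues *ᵥ y) = ∑ i, hH.eigenvalues i * (y i * y i) := by
    simp only [dotProduct, Matrix.mulVec_diagonal]
    exact Finset.sum_congr rfl fun i _ => by ring
  rw [hterm]
  have : y ⬝ᵥ y = ∑ i, y i * y i := rfl
  rw [this, Finset.mul_sum]
  refine Finset.sum_le_sum fun i _ => ?_
  have hle : hH.eigenvalues i ≤ L := le_ciSup (Set.Finite.bddAbove (Set.finite_range _)) i
  exact mul_le_mul_of_nonneg_right hle (mul_self_nonneg _)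

lemma enorm_mulVec_le {m n : ℕ} (A : Matrix (Fin m) (Fin n) ℝ) (v : Fin n → ℝ) :
    vecEnorm (A *ᵥ v) ≤ specNorm A * vecEnorm v := by
  set L := ⨆ i, (Matrix.isHermitian_mul_conjTranspose_self A).eigenvalues i with hLdef
  have hL : 0 ≤ L :=
    Real.iSup_nonneg fun i => Matrix.eigenvalues_self_mul_conjTranspose_nonneg A i
  set w := A *ᵥ v with hw
  have h1 : w ⬝ᵥ w = v ⬝ᵥ (Aᵀ *ᵥ w) := by
    rw [mulVec_transpose, dotProduct_comm v, dotProduct_mulVec]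
  have h3 : (Aᵀ *ᵥ w) ⬝ᵥ (Aᵀ *ᵥ w) = w ⬝ᵥ ((A * Aᴴ) *ᵥ w) := by
    rw [conjTranspose_eq_transpose_of_trivial, ← mulVec_mulVec,
      dotProduct_mulVec w, mulVec_transpose, dotProduct_comm]
  have hCS : (v ⬝ᵥ (Aᵀ *ᵥ w)) ^ 2 ≤ (v ⬝ᵥ v) * ((Aᵀ *ᵥ w) ⬝ᵥ (Aᵀ *ᵥ w)) := by
    have := Finset.sum_mul_sq_le_sq_mul_sq Finset.univ v (Aᵀ *ᵥ w)
    simpa [dotProduct, pow_two] using this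
  have hq := quadform_le A w
  have key : (w ⬝ᵥ w) ^ 2 ≤ (v ⬝ᵥ v) * (L * (w ⬝ᵥ w)) := by
    calc (w ⬝ᵥ w) ^ 2 = (v ⬝ᵥ (Aᵀ *ᵥ w)) ^ 2 := by rw [h1]
      _ ≤ (v ⬝ᵥ v) * ((Aᵀ *ᵥ w) ⬝ᵥ (Aᵀ *ᵥ w)) := hCS
      _ = (v ⬝ᵥ v) * (w ⬝ᵥ ((A * Aᴴ) *ᵥ w)) := by rw [h3]
      _ ≤ (v ⬝ᵥ v) * (L * (w ⬝ᵥ w)) :=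
          mul_le_mul_of_nonneg_left hq (dot_nonneg' v)
  have hww : w ⬝ᵥ w ≤ L * (v ⬝ᵥ v) := by
    rcases eq_or_lt_of_le (dot_nonneg' w) with h | h
    · rw [← h]; exact mul_nonneg hL (dot_nonneg' v)
    · nlinarith [dot_nonneg' v]
  rw [enorm_eq_sqrt_dot, enorm_eq_sqrt_dot]
  calc Real.sqrt (w ⬝ᵥ w) ≤ Real.sqrt (L * (v ⬝ᵥ v)) := Real.sqrt_le_sqrt hww
    _ = specNorm A * Real.sqrt (v ⬝ᵥ v) := by
        rw [Real.sqrt_mul hL]; rfl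

theorem stmt_0 {m n : ℕ} (A : Matrix (Fin m) (Fin n) ℝ)
    (d : Fin n → ℝ) (hd : ∀ j, 0 < d j)
    (M : Matrix (Fin n ⊕ Fin m) (Fin n ⊕ Fin m) ℝ)
    (hMdef : M = Matrix.fromBlocks (-(Matrix.diagonal d)⁻¹) Aᵀ A 0)
    (lam : ℝ) (hlam : lam ≠ 0)
    (x : Fin n ⊕ Fin m → ℝ) (hx : x ≠ 0)
    (heig : M.mulVec x = lam • x)
    (hxnorm : vecEnorm x = 1) :
    vecEnorm (x ∘ Sum.inr) ≤ specNorm A / Real.sqrt (lam ^ 2 + specNorm A ^ 2) := by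
  set x₁ : Fin n → ℝ := x ∘ Sum.inl with hx1
  set x₂ : Fin m → ℝ := x ∘ Sum.inr with hx2
  -- lower block equation
  have hAx : A *ᵥ x₁ = lam • x₂ := by
    funext j
    have h := congrFun heig (Sum.inr j)
    simp only [hMdef, mulVec, dotProduct, Fintype.sum_sum_type, fromBlocks_apply₂₁,
      fromBlocks_apply₂₂, Matrix.zero_apply, zero_mul, Finset.sum_const_zero, add_zero,
      Pi.smul_apply, smul_eq_mul] at h
    simpa [mulVec, dotProduct, hx1, hx2] using h
  have henormsmul : vecEnorm (lam • x₂) = |lam| * vecEnorm x₂ := by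
    simp only [vecEnorm, Pi.smul_apply, smul_eq_mul, mul_pow, ← Finset.mul_sum]
    rw [Real.sqrt_mul (sq_nonneg lam), Real.sqrt_sq_eq_abs]
  have hkey : |lam| * vecEnorm x₂ ≤ specNorm A * vecEnorm x₁ := by
    rw [← henormsmul, ← hAx]; exact enorm_mulVec_le A x₁
  have hsplit : vecEnorm x₁ ^ 2 + vecEnorm x₂ ^ 2 = 1 := by
    have h1 : vecEnorm x ^ 2 = 1 := by rw [hxnorm]; norm_num
    rw [vecEnorm, Real.sq_sqrt (Finset.sum_nonneg fun i _ => sq_nonneg _),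
      Fintype.sum_sum_type] at h1
    rw [vecEnorm, vecEnorm, Real.sq_sqrt (Finset.sum_nonneg fun i _ => sq_nonneg _),
      Real.sq_sqrt (Finset.sum_nonneg fun i _ => sq_nonneg _)]
    exact h1
  set s := specNorm A with hs
  have hs0 : 0 ≤ s := Real.sqrt_nonneg _
  set a := vecEnorm x₁
  set b := vecEnorm x₂
  have ha0 : 0 ≤ a := Real.sqrt_nonneg _
  have hb0 : 0 ≤ b := Real.sqrt_nonneg _
  have hpos : 0 < lam ^ 2 + s ^ 2 := by positivity
  set t := Real.sqrt (lam ^ 2 + s ^ 2) with htdef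
  have ht : 0 < t := Real.sqrt_pos.mpr hpos
  have ht2 : t ^ 2 = lam ^ 2 + s ^ 2 := Real.sq_sqrt hpos.le
  have hsq : (b * t) ^ 2 ≤ s ^ 2 := by
    have h2 : (|lam| * b) ^ 2 ≤ (s * a) ^ 2 := by
      apply pow_le_pow_left₀ (by positivity) hkey
    rw [mul_pow, sq_abs] at h2
    nlinarith [sq_nonneg b]
  have hbt : b * t ≤ s := by
    have := Real.sqrt_le_sqrt hsq
    rwa [Real.sqrt_sq (by positivity), Real.sqrt_sq hs0] at this
  exact (le_div_iff₀ ht).mpr hbt
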